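/- arXiv:1503.02554 — 3 statements merged into one kernel-verified Lean document; each statement's English description precedes it below -/
import Mathlib

section
/- Let G be a connected multigraph (loops and multiple edges allowed) and define its loop number L(G) = |V_1(G)| + |V_2(G)| + b_1(G), where |V_k(G)| is the number of vertices of degree k and b_1(G) = |E(G)| - |V(G)| + 1 is its first Betti number. If L(G) ≤ n for some n ≥ 2, then G has at most 2n - 2 vertices. -/
/-- A finite multigraph: loops and multiple edges allowed. Each edge is assigned its
pair of (possibly equal) endpoints. -/
structure Multigraph where
  V : Type
  E : Type
  [fintypeV : Fintype V]
  [decEqV : DecidableEq V]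
  [fintypeE : Fintype E]
  ends : E → Sym2 V

attribute [instance] Multigraph.fintypeV Multigraph.decEqV Multigraph.fintypeE

namespace Multigraph

variable (G : Multigraph)

/-- The degree of a vertex; a loop at `v` contributes `2` to the degree of `v`. -/
def degree (v : G.V) : ℕ :=
  ∑ e : G.E, (if G.ends e = Sym2.diag v then 2 else if v ∈ G.ends e then 1 else 0)

/-- Adjacency: some edge has endpoints `{u, v}`. -/
def Adj (u v : G.V) : Prop := ∃ e : G.E, G.ends e = s(u, v)

/-- A multigraph is connected if it is nonempty and any two vertices are joined by a walk. -/
def Connected : Prop := Nonempty G.V ∧ ∀ u v : G.V, Relation.ReflTransGen G.Adj u v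

/-- The first Betti number `b₁(G) = |E| - |V| + 1` of a connected multigraph. -/
def b1 : ℤ := (Fintype.card G.E : ℤ) - (Fintype.card G.V : ℤ) + 1

/-- The number of vertices of degree `k`. -/
def numDeg (k : ℕ) : ℕ := (Finset.univ.filter (fun v : G.V => G.degree v = k)).card

/-- The Feynman loop number `L(G) = |V₁(G)| + |V₂(G)| + b₁(G)`. -/
def loopNumber : ℤ := (G.numDeg 1 : ℤ) + (G.numDeg 2 : ℤ) + G.b1

/-- Handshake lemma for multigraphs. -/
lemma sum_degree : ∑ v : G.V, G.degree v = 2 * Fintype.card G.E := by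
  unfold degree
  rw [Finset.sum_comm]
  have key : ∀ e : G.E,
      (∑ v : G.V, if G.ends e = Sym2.diag v then 2 else if v ∈ G.ends e then 1 else 0) = 2 := by
    intro e
    generalize G.ends e = s
    induction s using Sym2.ind with
    | _ a b =>
      by_cases hab : a = b
      · subst hab
        have h1 : (∑ v : G.V, if s(a, a) = Sym2.diag v then 2 else
            if v ∈ s(a, a) then 1 else 0) = ∑ v : G.V, if v = a then 2 else 0 := by
          refine Finset.sum_congr rfl fun v _ => ?_
          by_cases hv : v = a
          · subst hv; simp [Sym2.diag]
          · have h2 : s(a, a) ≠ Sym2.diag v := by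
              intro h
              rw [show Sym2.diag v = s(v, v) from rfl, Sym2.eq_iff] at h
              rcases h with ⟨h, _⟩ | ⟨h, _⟩ <;> exact hv h.symm
            have h3 : v ∉ s(a, a) := by simp [Sym2.mem_iff, hv]
            simp [h2, h3, hv]
        rw [h1, Finset.sum_ite_eq' Finset.univ a (fun _ => 2)]
        simp
      · have h1 : (∑ v : G.V, if s(a, b) = Sym2.diag v then 2 else
            if v ∈ s(a, b) then 1 else 0) =
            ∑ v : G.V, ((if v = a then 1 else 0) + (if v = b then 1 else 0)) := by
          refine Finset.sum_congr rfl fun v _ => ?_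
          have hnd : s(a, b) ≠ Sym2.diag v := fun h =>
            hab (Sym2.mk_isDiag_iff.mp (h ▸ Sym2.diag_isDiag v))
          rw [if_neg hnd]
          by_cases hva : v = a
          · subst hva
            have : ¬ v = b := fun h => hab h
            simp [Sym2.mem_iff, this]
          · by_cases hvb : v = b
            · subst hvb; simp [Sym2.mem_iff, hva]
            · have hm : v ∉ s(a, b) := by
                simp only [Sym2.mem_iff]; push_neg; exact ⟨hva, hvb⟩
              simp [hm, hva, hvb]
        rw [h1, Finset.sum_add_distrib,
          Finset.sum_ite_eq' Finset.univ a (fun _ => 1),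
          Finset.sum_ite_eq' Finset.univ b (fun _ => 1)]
        simp
  rw [Finset.sum_congr rfl fun e _ => key e, Finset.sum_const, Finset.card_univ]
  rw [smul_eq_mul, mul_comm]

/-- In a connected multigraph with at least two vertices, every vertex has degree ≥ 1. -/
lemma one_le_degree (hconn : G.Connected) (hcard : 1 < Fintype.card G.V) (v : G.V) :
    1 ≤ G.degree v := by
  obtain ⟨u, hu⟩ := Fintype.exists_ne_of_one_lt_card hcard v
  rcases (hconn.2 v u).cases_head with rfl | ⟨w, hvw, _⟩
  · exact absurd rfl hu
  · obtain ⟨e, he⟩ := hvw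
    have hmem : v ∈ G.ends e := by rw [he]; exact Sym2.mem_mk_left v w
    have h1 : (1 : ℕ) ≤ if G.ends e = Sym2.diag v then 2 else
        if v ∈ G.ends e then 1 else 0 := by
      split_ifs with ha hb <;> first | omega | exact absurd hmem hb
    exact le_trans h1 (Finset.single_le_sum (f := fun e => if G.ends e = Sym2.diag v then 2
      else if v ∈ G.ends e then 1 else 0) (fun i _ => Nat.zero_le _) (Finset.mem_univ e))

end Multigraph

/-- A connected multigraph with loop number at most `n` (with `n ≥ 2`) has at most
`2n - 2` vertices. -/
theorem stmt_11 (n : ℕ) (hn : 2 ≤ n) (G : Multigraph) (hconn : G.Connected)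
    (hL : G.loopNumber ≤ n) : Fintype.card G.V ≤ 2 * n - 2 := by
  by_cases hcard : Fintype.card G.V ≤ 1
  · omega
  push_neg at hcard
  have hdeg := G.one_le_degree hconn hcard
  -- per-vertex inequality
  have key : ∀ v : G.V, 3 ≤ G.degree v + 2 * (if G.degree v = 1 then 1 else 0) +
      (if G.degree v = 2 then 1 else 0) := by
    intro v
    have := hdeg v
    split_ifs <;> omega
  have hsum : 3 * Fintype.card G.V ≤
      (∑ v : G.V, G.degree v) + 2 * G.numDeg 1 + G.numDeg 2 := by
    have h1 : (∑ v : G.V, (G.degree v + 2 * (if G.degree v = 1 then 1 else 0) +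
        (if G.degree v = 2 then 1 else 0))) =
        (∑ v : G.V, G.degree v) + 2 * G.numDeg 1 + G.numDeg 2 := by
      rw [Finset.sum_add_distrib, Finset.sum_add_distrib, ← Finset.mul_sum]
      unfold Multigraph.numDeg
      rw [Finset.sum_boole, Finset.sum_boole]
      simp
    calc 3 * Fintype.card G.V = ∑ _v : G.V, 3 := by simp [mul_comm]
      _ ≤ _ := Finset.sum_le_sum fun v _ => key v
      _ = _ := h1
  rw [G.sum_degree] at hsum
  -- translate hL
  unfold Multigraph.loopNumber Multigraph.b1 at hL
  omega
end

section
/- For each natural number n, there are (up to isomorphism) only finitely many connected multigraphs G with loop number L(G) = |V_1(G)| + |V_2(G)| + b_1(G) at most n. -/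
/-- An isomorphism of multigraphs: bijections on vertices and edges preserving endpoints. -/
def Multigraph.Iso (G H : Multigraph) : Prop :=
  ∃ (ev : G.V ≃ H.V) (ee : G.E ≃ H.E), ∀ e : G.E, H.ends (ee e) = Sym2.map ev (G.ends e)

/-! ### Auxiliary lemmas -/

lemma sym2_sum {V : Type} [Fintype V] [DecidableEq V] (s : Sym2 V) :
    ∑ v : V, (if s = Sym2.diag v then 2 else if v ∈ s then 1 else 0) = 2 := by
  induction s using Sym2.inductionOn with
  | hf a b =>
    by_cases hab : a = b
    · subst hab
      have : ∀ v : V, (if s(a,a) = Sym2.diag v then 2 else if v ∈ s(a,a) then 1 else 0)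
          = if v = a then 2 else 0 := by
        intro v
        by_cases h : v = a
        · subst h; simp [Sym2.diag]
        · simp [Sym2.diag, Sym2.eq_iff, h, Ne.symm h]
      simp only [this]
      simp
    · have : ∀ v : V, (if s(a,b) = Sym2.diag v then 2 else if v ∈ s(a,b) then 1 else 0)
          = if v ∈ ({a, b} : Finset V) then 1 else 0 := by
        intro v
        have hd : ¬ s(a,b) = Sym2.diag v := by
          simp only [Sym2.diag, Sym2.eq_iff]
          rintro (⟨rfl, rfl⟩ | ⟨rfl, rfl⟩) <;> exact hab rfl
        rw [if_neg hd]
        simp [Sym2.mem_iff]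
      rw [Finset.sum_congr rfl (fun v _ => this v), Finset.sum_ite_mem,
        Finset.univ_inter, Finset.sum_const]
      rw [Finset.card_pair hab]
      simp

lemma handshake (G : Multigraph) : ∑ v : G.V, G.degree v = 2 * Fintype.card G.E := by
  unfold Multigraph.degree
  rw [Finset.sum_comm]
  rw [Finset.sum_congr rfl (fun e _ => sym2_sum (G.ends e)), Finset.sum_const,
    Finset.card_univ, smul_eq_mul, mul_comm]

lemma deg_pos (G : Multigraph) (hc : G.Connected) (h2 : 2 ≤ Fintype.card G.V)
    (v : G.V) : 1 ≤ G.degree v := by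
  obtain ⟨u, hu⟩ := Fintype.exists_ne_of_one_lt_card (by omega) v
  have hw := (hc.2 v u).cases_head
  rcases hw with rfl | ⟨w, ⟨e, he⟩, _⟩
  · exact absurd rfl hu
  · have hmem : v ∈ G.ends e := by rw [he]; exact Sym2.mem_mk_left v w
    unfold Multigraph.degree
    calc 1 ≤ (if G.ends e = Sym2.diag v then 2 else if v ∈ G.ends e then 1 else 0) := by
          by_cases h : G.ends e = Sym2.diag v <;> simp [h, hmem]
        _ ≤ _ := Finset.single_le_sum
            (f := fun e => if G.ends e = Sym2.diag v then 2 else if v ∈ G.ends e then 1 else 0)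
            (fun _ _ => Nat.zero_le _) (Finset.mem_univ e)

lemma sum_ite_card {V : Type} [Fintype V] [DecidableEq V] (p : V → Prop) [DecidablePred p]
    (c : ℕ) : ∑ v : V, (if p v then c else 0) = c * (Finset.univ.filter p).card := by
  rw [← Finset.sum_filter, Finset.sum_const, smul_eq_mul, mul_comm]

lemma sum_lb (G : Multigraph) (hd : ∀ v : G.V, 1 ≤ G.degree v) :
    3 * Fintype.card G.V ≤ (∑ v : G.V, G.degree v) + 2 * G.numDeg 1 + G.numDeg 2 := by
  have key : ∀ v : G.V, 3 ≤ G.degree v + (if G.degree v = 1 then 2 else 0)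
      + (if G.degree v = 2 then 1 else 0) := by
    intro v
    have := hd v
    by_cases h1 : G.degree v = 1
    · simp [h1]
    · by_cases h2 : G.degree v = 2 <;> simp [h1, h2] <;> omega
  have hsum : 3 * Fintype.card G.V = ∑ _v : G.V, 3 := by
    simp [Finset.card_univ, mul_comm]
  calc 3 * Fintype.card G.V = ∑ _v : G.V, 3 := hsum
    _ ≤ ∑ v : G.V, (G.degree v + (if G.degree v = 1 then 2 else 0)
        + (if G.degree v = 2 then 1 else 0)) := Finset.sum_le_sum (fun v _ => key v)
    _ = (∑ v : G.V, G.degree v) + 2 * G.numDeg 1 + G.numDeg 2 := by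
        rw [Finset.sum_add_distrib, Finset.sum_add_distrib,
          sum_ite_card (fun v => G.degree v = 1) 2,
          sum_ite_card (fun v => G.degree v = 2) 1, Multigraph.numDeg, Multigraph.numDeg,
          one_mul]

lemma card_bounds (G : Multigraph) (n : ℕ) (hc : G.Connected) (hl : G.loopNumber ≤ n) :
    Fintype.card G.V ≤ 2 * n + 1 ∧ Fintype.card G.E ≤ 3 * n + 1 := by
  have hV1 : 1 ≤ Fintype.card G.V := Fintype.card_pos_iff.mpr hc.1
  have hV : Fintype.card G.V ≤ 2 * n + 1 := by
    by_cases h2 : 2 ≤ Fintype.card G.V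
    · have hlb := sum_lb G (deg_pos G hc h2)
      rw [handshake] at hlb
      have hln : (G.numDeg 1 : ℤ) + G.numDeg 2 + ((Fintype.card G.E : ℤ)
          - Fintype.card G.V + 1) ≤ n := hl
      have : (3 * Fintype.card G.V : ℤ) ≤ 2 * Fintype.card G.E + 2 * G.numDeg 1
          + G.numDeg 2 := by exact_mod_cast hlb
      omega
    · omega
  refine ⟨hV, ?_⟩
  have hln : (G.numDeg 1 : ℤ) + G.numDeg 2 + ((Fintype.card G.E : ℤ)
      - Fintype.card G.V + 1) ≤ n := hl
  have h1 : (0:ℤ) ≤ G.numDeg 1 := Int.natCast_nonneg _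
  have h2 : (0:ℤ) ≤ G.numDeg 2 := Int.natCast_nonneg _
  omega

/-- Canonical multigraph on `Fin v` and `Fin e`. -/
def mkMG (v e : ℕ) (f : Fin e → Sym2 (Fin v)) : Multigraph := ⟨Fin v, Fin e, f⟩

/-- Data type enumerating all canonical multigraphs with bounded vertex/edge counts. -/
abbrev Reps (n : ℕ) := (v : Fin (2*n+2)) × (e : Fin (3*n+2)) × (Fin e.val → Sym2 (Fin v.val))

def mkOf {n : ℕ} (r : Reps n) : Multigraph := mkMG r.1 r.2.1 r.2.2

noncomputable def repsFun (n : ℕ) : Fin (Fintype.card (Reps n)) → Multigraph :=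
  fun i => mkOf ((Fintype.equivFin (Reps n)).symm i)

lemma iso_rep (n : ℕ) (G : Multigraph) (hV : Fintype.card G.V ≤ 2*n+1)
    (hE : Fintype.card G.E ≤ 3*n+1) :
    ∃ i, G.Iso (repsFun n i) := by
  set v := Fintype.card G.V
  set e := Fintype.card G.E
  have ev : G.V ≃ Fin v := Fintype.equivFin _
  have ee : G.E ≃ Fin e := Fintype.equivFin _
  set f : Fin e → Sym2 (Fin v) := fun i => Sym2.map ev (G.ends (ee.symm i)) with hf
  set r : Reps n := ⟨⟨v, by omega⟩, ⟨e, by omega⟩, f⟩ with hr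
  refine ⟨Fintype.equivFin (Reps n) r, ?_⟩
  have hrep : repsFun n (Fintype.equivFin (Reps n) r) = mkOf r :=
    congrArg mkOf (Equiv.symm_apply_apply _ _)
  rw [hrep]
  exact ⟨ev, ee, fun x => by show f (ee x) = Sym2.map ev (G.ends x); simp [hf]⟩

/-- For each `n`, there are only finitely many connected multigraphs with loop number
at most `n`, up to isomorphism. -/
theorem stmt_13 (n : ℕ) :
    ∃ (k : ℕ) (reps : Fin k → Multigraph), ∀ G : Multigraph,
      G.Connected → G.loopNumber ≤ n → ∃ i : Fin k, G.Iso (reps i) := by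
  refine ⟨Fintype.card (Reps n), repsFun n, fun G hc hl => ?_⟩
  obtain ⟨hV, hE⟩ := card_bounds G n hc hl
  exact iso_rep n G hV hE
end

section
/- A connected multigraph G with loop number L(G) = |V_1(G)| + |V_2(G)| + b_1(G) ≤ n has at most 3n - 3 edges, for n ≥ 2. -/
namespace Multigraph

lemma edge_sum_two (G : Multigraph) (e : G.E) :
    ∑ v : G.V, (if G.ends e = Sym2.diag v then 2 else if v ∈ G.ends e then 1 else 0) = 2 := by
  obtain ⟨⟨a, b⟩, hab⟩ := (G.ends e).exists_rep
  have hab' : G.ends e = s(a, b) := hab.symm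
  rw [Finset.sum_congr rfl (fun v _ => by rw [hab'])]
  by_cases h : a = b
  · subst h
    have key : ∀ v : G.V, (if s(a, a) = Sym2.diag v then 2 else if v ∈ s(a, a) then 1 else 0)
        = (if v = a then 2 else 0) := by
      intro v
      by_cases hv : v = a
      · subst hv; simp [Sym2.diag]
      · simp [Sym2.diag, Sym2.eq_iff, Sym2.mem_iff, hv, Ne.symm hv]
    rw [Finset.sum_congr rfl (fun v _ => key v)]
    simp
  · have key : ∀ v : G.V, (if s(a, b) = Sym2.diag v then 2 else if v ∈ s(a, b) then 1 else 0)
        = (if v = a then 1 else 0) + (if v = b then 1 else 0) := by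
      intro v
      have hd : ¬ (s(a, b) = Sym2.diag v) := by
        intro hc
        rw [Sym2.diag, Sym2.eq_iff] at hc
        rcases hc with ⟨h1, h2⟩ | ⟨h1, h2⟩ <;> exact h (h1.trans h2.symm)
      rw [if_neg hd]
      by_cases hv : v = a
      · subst hv; simp [Sym2.mem_iff, h]
      · by_cases hv2 : v = b
        · subst hv2; simp [Sym2.mem_iff, hv, Ne.symm h]
        · simp [Sym2.mem_iff, hv, hv2]
    rw [Finset.sum_congr rfl (fun v _ => key v)]
    rw [Finset.sum_add_distrib]
    simp [h]

lemma handshake (G : Multigraph) : ∑ v : G.V, G.degree v = 2 * Fintype.card G.E := by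
  unfold degree
  rw [Finset.sum_comm]
  rw [Finset.sum_congr rfl (fun e _ => G.edge_sum_two e)]
  rw [Finset.sum_const, Finset.card_univ, smul_eq_mul, mul_comm]

lemma degree_pos (G : Multigraph) (hconn : G.Connected) (hV : 1 < Fintype.card G.V)
    (v : G.V) : 1 ≤ G.degree v := by
  obtain ⟨u, hu⟩ := Fintype.exists_ne_of_one_lt_card hV v
  have hwalk := hconn.2 v u
  rcases (Relation.ReflTransGen.cases_head hwalk) with h | ⟨w, ⟨e, he⟩, _⟩
  · exact absurd h.symm hu
  · have hmem : v ∈ G.ends e := by rw [he]; simp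
    have hle : (if G.ends e = Sym2.diag v then 2 else if v ∈ G.ends e then 1 else 0)
        ≤ G.degree v := by
      apply Finset.single_le_sum
        (f := fun e => (if G.ends e = Sym2.diag v then 2 else if v ∈ G.ends e then 1 else 0))
      · intro i _; positivity
      · exact Finset.mem_univ e
    by_cases h1 : G.ends e = Sym2.diag v
    · rw [if_pos h1] at hle; omega
    · rw [if_neg h1, if_pos hmem] at hle; omega

end Multigraph

/-- A connected multigraph with loop number at most `n` (with `n ≥ 2`) has at most
`3n - 3` edges. -/
theorem stmt_18 (n : ℕ) (hn : 2 ≤ n) (G : Multigraph) (hconn : G.Connected)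
    (hL : G.loopNumber ≤ n) : Fintype.card G.E ≤ 3 * n - 3 := by
  have hhand := G.handshake
  have hcardV : 1 ≤ Fintype.card G.V := Fintype.card_pos_iff.mpr hconn.1
  unfold Multigraph.loopNumber Multigraph.b1 at hL
  by_cases hV : 1 < Fintype.card G.V
  · -- every vertex has degree ≥ 1
    set g : G.V → ℕ := fun v => if G.degree v = 1 then 2 else if G.degree v = 2 then 1 else 0 with hg
    have hsum3 : 3 * Fintype.card G.V ≤ ∑ v : G.V, (G.degree v + g v) := by
      have h3 : ∀ v ∈ Finset.univ, 3 ≤ G.degree v + g v := by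
        intro v _
        have hd := G.degree_pos hconn hV v
        simp only [hg]
        split_ifs with h1 h2 <;> omega
      calc 3 * Fintype.card G.V = Fintype.card G.V • 3 := by
              rw [smul_eq_mul, mul_comm]
        _ = Finset.univ.card • 3 := by rw [Finset.card_univ]
        _ ≤ ∑ v : G.V, (G.degree v + g v) := Finset.card_nsmul_le_sum _ _ _ h3
    have hgsum : ∑ v : G.V, g v ≤ 2 * G.numDeg 1 + G.numDeg 2 := by
      have key : ∀ v : G.V, g v = 2 * (if G.degree v = 1 then 1 else 0)
          + (if G.degree v = 2 then 1 else 0) := by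
        intro v
        simp only [hg]
        split_ifs with h1 h2 <;> omega
      rw [Finset.sum_congr rfl (fun v _ => key v), Finset.sum_add_distrib, ← Finset.mul_sum]
      unfold Multigraph.numDeg
      simp [Finset.sum_boole]
    have hEsum : ∑ v : G.V, (G.degree v + g v) = 2 * Fintype.card G.E + ∑ v : G.V, g v := by
      rw [Finset.sum_add_distrib, hhand]
    have key : 3 * Fintype.card G.V ≤ 2 * Fintype.card G.E + 2 * G.numDeg 1 + G.numDeg 2 := by
      omega
    have hLn : (G.numDeg 1 : ℤ) + G.numDeg 2 + (Fintype.card G.E - Fintype.card G.V + 1) ≤ n := hL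
    omega
  · have h1 : Fintype.card G.V = 1 := by omega
    rw [h1] at hL
    omega
end
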